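/- Lefschetz-type injectivity: on a complex vector space V of complex dimension n ≥ 2 with a nondegenerate (1,1)-form ω, the linear map from 1-covectors to 3-covectors given by η ↦ η ∧ ω is injective. -/
import Mathlib


/-- Lefschetz-type injectivity: on a real vector space V of dimension 2n with
n ≥ 2, equipped with a nondegenerate alternating 2-form ω, the map
η ↦ η ∧ ω from 1-covectors to 3-covectors is injective. The 3-covector
(η ∧ ω)(x,y,z) = η(x)ω(y,z) − η(y)ω(x,z) + η(z)ω(x,y). -/
theorem stmt_6 {V : Type*} [AddCommGroup V] [Module ℝ V]
    [FiniteDimensional ℝ V]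
    (n : ℕ) (hn : 2 ≤ n) (hdim : Module.finrank ℝ V = 2 * n)
    (ω : LinearMap.BilinForm ℝ V)
    (halt : ∀ v, ω v v = 0)                          -- ω alternating
    (hnd : ∀ v, (∀ w, ω v w = 0) → v = 0) :          -- ω nondegenerate
    Function.Injective (fun η : Module.Dual ℝ V =>
      fun x y z : V => η x * ω y z - η y * ω x z + η z * ω x y) := by
  intro η₁ η₂ h
  set η : Module.Dual ℝ V := η₁ - η₂ with hηdef
  have key : ∀ x y z : V, η x * ω y z - η y * ω x z + η z * ω x y = 0 := by
    intro x y z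
    have := congrFun (congrFun (congrFun h x) y) z
    simp only [hηdef, LinearMap.sub_apply]
    ring_nf
    ring_nf at this
    linarith
  have hη0 : η = 0 := by
    by_contra hne
    have hex : ∃ x, η x ≠ 0 := by
      by_contra h'
      push_neg at h'
      exact hne (LinearMap.ext fun v => by simp [h' v])
    obtain ⟨x, hx⟩ := hex
    set β : Module.Dual ℝ V := (η x)⁻¹ • (ω x) with hβdef
    have hω : ∀ y z, ω y z = η y * β z - η z * β y := by
      intro y z
      have hk := key x y z
      simp only [hβdef, LinearMap.smul_apply, smul_eq_mul]
      field_simp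
      ring_nf
      ring_nf at hk
      linarith
    have hrank := LinearMap.finrank_range_add_finrank_ker (η.prod β)
    have hr2 : Module.finrank ℝ (LinearMap.range (η.prod β)) ≤ 2 := by
      have := Submodule.finrank_le (LinearMap.range (η.prod β))
      simpa [Module.finrank_prod] using this
    have hKpos : 0 < Module.finrank ℝ (LinearMap.ker (η.prod β)) := by
      rw [hdim] at hrank
      omega
    have : Nontrivial (LinearMap.ker (η.prod β)) := Module.finrank_pos_iff.mp hKpos
    obtain ⟨v, hv0⟩ := exists_ne (0 : LinearMap.ker (η.prod β))
    have hvK : (v : V) ∈ LinearMap.ker (η.prod β) := v.2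
    have hv0' : (v : V) ≠ 0 := fun hz => hv0 (Subtype.ext hz)
    have hmem : η (v : V) = 0 ∧ β (v : V) = 0 := by
      have h2 := hvK
      rw [LinearMap.mem_ker, LinearMap.prod_apply] at h2
      exact ⟨congrArg Prod.fst h2, congrArg Prod.snd h2⟩
    have : (v : V) = 0 := hnd v (fun w => by rw [hω (v : V) w, hmem.1, hmem.2]; ring)
    exact hv0' this
  exact sub_eq_zero.mp hη0
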